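/- arXiv:1310.7055 — 4 statements merged into one kernel-verified Lean document; each statement's English description precedes it below -/
import Mathlib

section
/- Let n ≥ 1, c ≥ 1 be integers and let ω = (t_1, t_2, …) be a strictly increasing sequence of positive reals. Set b := B(c,n)(ω) and i := b − c, and let a(i,n) := Σ_{0 ≤ j < i} f(j/n). Then a(i,n) ≤ t_c ≤ a(i,n) + c·f(i/n). -/
open MeasureTheory Filter Topology
open scoped ENNReal NNReal

/-- The function `f(p) = -log(1-p)` for `0 ≤ p < 1`, `f(1) = ∞`, evaluated at `p = i/n`,
taking values in `ℝ≥0∞`. -/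
noncomputable def fE (n : ℕ) (i : ℕ) : ℝ≥0∞ :=
  if i < n then ENNReal.ofReal (-Real.log (1 - (i : ℝ) / n)) else ⊤

/-- The embedded collision process: `Bemb n t c` is `B(c,n)(ω)` for the strictly increasing
sequence `ω = (t 1, t 2, …)` of positive reals (with `t 0 = 0`). -/
noncomputable def Bemb (n : ℕ) (t : ℕ → ℝ) : ℕ → ℕ
  | 0 => 0
  | c + 1 =>
      Bemb n t c +
        sInf {j : ℕ | 1 ≤ j ∧
          ENNReal.ofReal (t (c + 1) - t c) ≤
            ∑ i ∈ Finset.Ico (Bemb n t c - c) (Bemb n t c - c + j), fE n i}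

/-- `a(i,n) = Σ_{0 ≤ j < i} f(j/n)`. -/
noncomputable def aE (i n : ℕ) : ℝ≥0∞ := ∑ j ∈ Finset.range i, fE n j

lemma fE_mono (n : ℕ) : Monotone (fE n) := by
  intro i j hij
  unfold fE
  by_cases hj : j < n
  · have hi : i < n := lt_of_le_of_lt hij hj
    rw [if_pos hi, if_pos hj]
    apply ENNReal.ofReal_le_ofReal
    have hn : (0 : ℝ) < n := by
      have : 0 < n := by omega
      exact_mod_cast this
    have h1 : (0 : ℝ) < 1 - (j : ℝ) / n := by
      rw [sub_pos, div_lt_one hn]; exact_mod_cast hj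
    have h2 : (1 : ℝ) - (j : ℝ) / n ≤ 1 - (i : ℝ) / n := by
      have : (i : ℝ) / n ≤ (j : ℝ) / n := by
        gcongr
      linarith
    have := Real.log_le_log h1 h2
    linarith
  · rw [if_neg hj]; exact le_top

lemma setNe (n : ℕ) (J : ℕ) (r : ℝ≥0∞) :
    (n + 1) ∈ {j : ℕ | 1 ≤ j ∧ r ≤ ∑ i ∈ Finset.Ico J (J + j), fE n i} := by
  refine ⟨Nat.le_add_left 1 n, ?_⟩
  have : ∑ i ∈ Finset.Ico J (J + (n + 1)), fE n i = ⊤ := by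
    rw [ENNReal.sum_eq_top]
    refine ⟨J + n, ?_, ?_⟩
    · simp [Finset.mem_Ico]
    · unfold fE
      rw [if_neg (by omega)]
  simp [this]

lemma key (n : ℕ) (t : ℕ → ℝ) (ht : StrictMono t) (ht0 : t 0 = 0) (c : ℕ) :
    c ≤ Bemb n t c ∧ aE (Bemb n t c - c) n ≤ ENNReal.ofReal (t c) ∧
      ENNReal.ofReal (t c) ≤ aE (Bemb n t c - c) n + c * fE n (Bemb n t c - c) := by
  induction c with
  | zero => simp [Bemb, aE, ht0]
  | succ c ih =>
      obtain ⟨hbc, hlow, hup⟩ := ih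
      set S := {j : ℕ | 1 ≤ j ∧
          ENNReal.ofReal (t (c + 1) - t c) ≤
            ∑ i ∈ Finset.Ico (Bemb n t c - c) (Bemb n t c - c + j), fE n i} with hS
      have hne : S.Nonempty := ⟨n + 1, setNe n (Bemb n t c - c) _⟩
      set j := sInf S with hj
      have hjmem : j ∈ S := Nat.sInf_mem hne
      obtain ⟨hj1, hjsum⟩ := hjmem
      have hB : Bemb n t c - c + (j - 1) = Bemb n t c + j - (c + 1) := by omega
      have hBq : Bemb n t (c + 1) = Bemb n t c + j := rfl
      set I := Bemb n t c - c with hI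
      set I' := Bemb n t c + j - (c + 1) with hI'
      have hII' : I' = I + (j - 1) := by omega
      have hIle : I ≤ I' := by omega
      have hbc1 : c + 1 ≤ Bemb n t (c + 1) := by rw [hBq]; omega
      have htc : 0 ≤ t c := by
        rw [← ht0]; exact (ht.monotone (Nat.zero_le c))
      have hΔ : 0 ≤ t (c + 1) - t c := le_of_lt (sub_pos.mpr (ht (Nat.lt_succ_self c)))
      have hsplit : ENNReal.ofReal (t (c + 1)) =
          ENNReal.ofReal (t c) + ENNReal.ofReal (t (c + 1) - t c) := by
        rw [← ENNReal.ofReal_add htc hΔ]; ring_nf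
      have haE : aE I' n = aE I n + ∑ i ∈ Finset.Ico I I', fE n i := by
        simp only [aE, Finset.range_eq_Ico]
        exact (Finset.sum_Ico_consecutive _ (Nat.zero_le I) hIle).symm
      -- lower bound part: sum over Ico I I' < Δ (or = 0 if j = 1)
      have hlowsum : ∑ i ∈ Finset.Ico I I', fE n i ≤ ENNReal.ofReal (t (c + 1) - t c) := by
        rcases Nat.lt_or_ge j 2 with h2 | h2
        · have : j = 1 := by omega
          have : I' = I := by omega
          simp [this]
        · have hnot : j - 1 ∉ S := Nat.notMem_of_lt_sInf (by omega)
          rw [hS, Set.mem_setOf_eq] at hnot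
          push_neg at hnot
          have := hnot (by omega)
          rw [hII']
          exact le_of_lt this
      constructor
      · exact hbc1
      constructor
      · show aE (Bemb n t (c+1) - (c+1)) n ≤ ENNReal.ofReal (t (c+1))
        have hq : Bemb n t (c+1) - (c+1) = I' := by rw [hBq]
        rw [hq, haE, hsplit]
        exact add_le_add hlow hlowsum
      · show ENNReal.ofReal (t (c+1)) ≤ aE (Bemb n t (c+1) - (c+1)) n + (c+1 : ℕ) * fE n (Bemb n t (c+1) - (c+1))
        have hq : Bemb n t (c+1) - (c+1) = I' := by rw [hBq]
        rw [hq, haE, hsplit]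
        -- Δ ≤ sum over Ico I (I + j) = sum over Ico I I' + fE n I'
        have hsum2 : ∑ i ∈ Finset.Ico I (I + j), fE n i
            = ∑ i ∈ Finset.Ico I I', fE n i + fE n I' := by
          have : I + j = I' + 1 := by omega
          rw [this, Finset.sum_Ico_succ_top (by omega)]
        have hΔle : ENNReal.ofReal (t (c+1) - t c) ≤ ∑ i ∈ Finset.Ico I I', fE n i + fE n I' := by
          rw [← hsum2]; exact hjsum
        have hmono : fE n I ≤ fE n I' := fE_mono n hIle
        calc ENNReal.ofReal (t c) + ENNReal.ofReal (t (c+1) - t c)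
            ≤ (aE I n + c * fE n I) + (∑ i ∈ Finset.Ico I I', fE n i + fE n I') :=
              add_le_add hup hΔle
          _ ≤ (aE I n + ∑ i ∈ Finset.Ico I I', fE n i) + ((c + 1 : ℕ) * fE n I') := by
              push_cast
              have : (c : ℝ≥0∞) * fE n I ≤ c * fE n I' := by
                exact mul_le_mul_right hmono c
              calc (aE I n + c * fE n I) + (∑ i ∈ Finset.Ico I I', fE n i + fE n I')
                  ≤ (aE I n + c * fE n I') + (∑ i ∈ Finset.Ico I I', fE n i + fE n I') := by
                    gcongr
                _ = (aE I n + ∑ i ∈ Finset.Ico I I', fE n i) + ((c : ℝ≥0∞) + 1) * fE n I' := by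
                    ring

theorem stmt_1 (n c : ℕ) (hn : 1 ≤ n) (hc : 1 ≤ c)
    (t : ℕ → ℝ) (ht : StrictMono t) (ht0 : t 0 = 0) :
    aE (Bemb n t c - c) n ≤ ENNReal.ofReal (t c) ∧
      ENNReal.ofReal (t c) ≤ aE (Bemb n t c - c) n + c * fE n (Bemb n t c - c) := by
  exact (key n t ht ht0 c).2
end

section
/- Let n ≥ 1, c ≥ 1 be integers and let ω = (t_1, t_2, …) be a strictly increasing sequence of positive reals. Set i := B(c,n)(ω) − c. If i < n/2, then |(B(c,n)(ω) − c)²/(2n) − t_c| ≤ i/(2n) + i³/(3n²) + 2ci/n. -/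
open MeasureTheory Filter Topology
open scoped ENNReal NNReal

namespace StmtAux2

variable (n : ℕ) (t : ℕ → ℝ)

/-- shorthand for the running index -/
noncomputable def M (c : ℕ) : ℕ := Bemb n t c - c

/-- the set whose infimum defines the next step -/
def S (c : ℕ) : Set ℕ :=
  {j : ℕ | 1 ≤ j ∧
    ENNReal.ofReal (t (c + 1) - t c) ≤
      ∑ i ∈ Finset.Ico (Bemb n t c - c) (Bemb n t c - c + j), fE n i}

lemma Bemb_succ (c : ℕ) : Bemb n t (c + 1) = Bemb n t c + sInf (S n t c) := rfl

lemma S_nonempty (c : ℕ) : (S n t c).Nonempty := by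
  refine ⟨n + 1, by omega, ?_⟩
  have hmem : Bemb n t c - c + n ∈
      Finset.Ico (Bemb n t c - c) (Bemb n t c - c + (n + 1)) := by
    simp [Finset.mem_Ico]
  have htop : fE n (Bemb n t c - c + n) = ⊤ := by
    unfold fE; rw [if_neg (by omega)]
  rw [ENNReal.sum_eq_top.mpr ⟨_, hmem, htop⟩]
  exact le_top

lemma one_le_sInf (c : ℕ) : 1 ≤ sInf (S n t c) :=
  (Nat.sInf_mem (S_nonempty n t c)).1

lemma le_Bemb (c : ℕ) : c ≤ Bemb n t c := by
  induction c with
  | zero => simp [Bemb]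
  | succ c ih =>
    rw [Bemb_succ]
    have := one_le_sInf n t c
    omega

lemma M_succ (c : ℕ) : M n t (c + 1) + 1 = M n t c + sInf (S n t c) := by
  have h1 := le_Bemb n t c
  have h2 := one_le_sInf n t c
  unfold M
  rw [Bemb_succ]
  omega

lemma M_mono (c : ℕ) : M n t c ≤ M n t (c + 1) := by
  have := M_succ n t c
  have := one_le_sInf n t c
  omega

lemma step_up (c : ℕ) :
    ENNReal.ofReal (t (c + 1) - t c) ≤
      ∑ i ∈ Finset.Ico (M n t c) (M n t (c + 1) + 1), fE n i := by
  have h := (Nat.sInf_mem (S_nonempty n t c)).2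
  rw [M_succ]
  exact h

lemma step_low (ht : StrictMono t) (c : ℕ) :
    ∑ i ∈ Finset.Ico (M n t c) (M n t (c + 1)), fE n i <
      ENNReal.ofReal (t (c + 1) - t c) := by
  have hpos : (0 : ℝ≥0∞) < ENNReal.ofReal (t (c + 1) - t c) := by
    rw [ENNReal.ofReal_pos]
    have := ht (Nat.lt_succ_self c)
    linarith
  have hM := M_succ n t c
  rcases eq_or_lt_of_le (one_le_sInf n t c) with h1 | h1
  · have : M n t (c + 1) = M n t c := by omega
    rw [this, Finset.Ico_self, Finset.sum_empty]
    exact hpos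
  · -- sInf ≥ 2, use minimality at sInf - 1
    have hnot : ¬ (1 ≤ sInf (S n t c) - 1 ∧
        ENNReal.ofReal (t (c + 1) - t c) ≤
          ∑ i ∈ Finset.Ico (Bemb n t c - c)
            (Bemb n t c - c + (sInf (S n t c) - 1)), fE n i) :=
      Nat.notMem_of_lt_sInf (s := S n t c) (by omega)
    push_neg at hnot
    have key := hnot (by omega)
    have harg : Bemb n t c - c + (sInf (S n t c) - 1) = M n t (c + 1) := by
      have h1' := le_Bemb n t c
      have h2' := Bemb_succ n t c
      unfold M
      omega
    have harg2 : Bemb n t c - c = M n t c := rfl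
    rwa [harg, harg2] at key

lemma t_nonneg (ht : StrictMono t) (ht0 : t 0 = 0) (c : ℕ) : 0 ≤ t c := by
  rcases Nat.eq_zero_or_pos c with h | h
  · simp [h, ht0]
  · have := ht h
    linarith [ht0 ▸ this]

lemma tele_low (ht : StrictMono t) (ht0 : t 0 = 0) (c : ℕ) :
    ∑ i ∈ Finset.range (M n t (c + 1)), fE n i < ENNReal.ofReal (t (c + 1)) := by
  induction c with
  | zero =>
    have h := step_low n t ht 0
    have hM0 : M n t 0 = 0 := by unfold M; simp [Bemb]
    rw [hM0, ht0, sub_zero] at h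
    rwa [Finset.range_eq_Ico]
  | succ c ih =>
    have hsplit : ∑ i ∈ Finset.range (M n t (c + 2)), fE n i =
        ∑ i ∈ Finset.range (M n t (c + 1)), fE n i +
          ∑ i ∈ Finset.Ico (M n t (c + 1)) (M n t (c + 2)), fE n i := by
      rw [Finset.range_eq_Ico, Finset.range_eq_Ico]
      exact (Finset.sum_Ico_consecutive (fE n) (Nat.zero_le _) (M_mono n t (c + 1))).symm
    rw [hsplit]
    have h2 := step_low n t ht (c + 1)
    calc ∑ i ∈ Finset.range (M n t (c + 1)), fE n i +
          ∑ i ∈ Finset.Ico (M n t (c + 1)) (M n t (c + 2)), fE n i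
        < ENNReal.ofReal (t (c + 1)) + ENNReal.ofReal (t (c + 2) - t (c + 1)) :=
          ENNReal.add_lt_add ih h2
      _ = ENNReal.ofReal (t (c + 2)) := by
          rw [← ENNReal.ofReal_add (t_nonneg t ht ht0 (c + 1)) (by linarith [ht (Nat.lt_succ_self (c + 1))])]
          ring_nf

lemma fE_mono : Monotone (fE n) := by
  intro i k h
  unfold fE
  by_cases hk : k < n
  · rw [if_pos (lt_of_le_of_lt h hk), if_pos hk]
    apply ENNReal.ofReal_le_ofReal
    have hn : (0 : ℝ) < n := by exact_mod_cast (by omega : 0 < n)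
    have hik : (i : ℝ) ≤ k := by exact_mod_cast h
    have hkn : (k : ℝ) < n := by exact_mod_cast hk
    have h1 : (0 : ℝ) < 1 - k / n := by
      rw [sub_pos, div_lt_one hn]; exact hkn
    have h2 : (1 : ℝ) - k / n ≤ 1 - i / n := by
      have : (i : ℝ) / n ≤ k / n := by gcongr
      linarith
    have := Real.log_le_log h1 h2
    linarith
  · rw [if_neg hk]; exact le_top

lemma tele_up (ht : StrictMono t) (ht0 : t 0 = 0) (c : ℕ) :
    ENNReal.ofReal (t (c + 1)) ≤
      ∑ i ∈ Finset.range (M n t (c + 1) + 1), fE n i +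
        (c : ℝ≥0∞) * fE n (M n t (c + 1)) := by
  induction c with
  | zero =>
    have h := step_up n t 0
    have hM0 : M n t 0 = 0 := by unfold M; simp [Bemb]
    rw [hM0, ht0, sub_zero] at h
    rw [← Finset.range_eq_Ico] at h
    simpa using h
  | succ c ih =>
    have hsplit : ∑ i ∈ Finset.Ico (M n t (c + 1)) (M n t (c + 2) + 1), fE n i =
        fE n (M n t (c + 1)) +
          ∑ i ∈ Finset.Ico (M n t (c + 1) + 1) (M n t (c + 2) + 1), fE n i :=
      Finset.sum_eq_sum_Ico_succ_bot (Nat.lt_succ_of_le (M_mono n t (c + 1))) _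
    have hjoin : ∑ i ∈ Finset.range (M n t (c + 1) + 1), fE n i +
        ∑ i ∈ Finset.Ico (M n t (c + 1) + 1) (M n t (c + 2) + 1), fE n i =
        ∑ i ∈ Finset.range (M n t (c + 2) + 1), fE n i := by
      rw [Finset.range_eq_Ico, Finset.range_eq_Ico]
      exact Finset.sum_Ico_consecutive (fE n) (Nat.zero_le _)
        (Nat.succ_le_succ (M_mono n t (c + 1)))
    have hmono : fE n (M n t (c + 1)) ≤ fE n (M n t (c + 2)) :=
      fE_mono n (M_mono n t (c + 1))
    calc ENNReal.ofReal (t (c + 2))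
        = ENNReal.ofReal (t (c + 1)) + ENNReal.ofReal (t (c + 2) - t (c + 1)) := by
          rw [← ENNReal.ofReal_add (t_nonneg t ht ht0 (c + 1))
            (by linarith [ht (Nat.lt_succ_self (c + 1))])]
          ring_nf
      _ ≤ (∑ i ∈ Finset.range (M n t (c + 1) + 1), fE n i +
            (c : ℝ≥0∞) * fE n (M n t (c + 1))) +
          ∑ i ∈ Finset.Ico (M n t (c + 1)) (M n t (c + 2) + 1), fE n i :=
          add_le_add ih (step_up n t (c + 1))
      _ = ∑ i ∈ Finset.range (M n t (c + 2) + 1), fE n i +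
          ((c : ℝ≥0∞) * fE n (M n t (c + 1)) + fE n (M n t (c + 1))) := by
          rw [hsplit, ← hjoin]; ring
      _ ≤ ∑ i ∈ Finset.range (M n t (c + 2) + 1), fE n i +
          ((c + 1 : ℕ) : ℝ≥0∞) * fE n (M n t (c + 2)) := by
          gcongr
          have : ((c + 1 : ℕ) : ℝ≥0∞) * fE n (M n t (c + 2)) =
              (c : ℝ≥0∞) * fE n (M n t (c + 2)) + fE n (M n t (c + 2)) := by
            push_cast; ring
          rw [this]
          exact add_le_add (by gcongr) hmono

/-- `x ≤ -log (1-x)` -/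
lemma neg_log_lb {x : ℝ} (h1 : x < 1) : x ≤ -Real.log (1 - x) := by
  have := Real.log_le_sub_one_of_pos (by linarith : (0 : ℝ) < 1 - x)
  linarith

/-- `-log (1-x) ≤ x + x²` for `0 ≤ x ≤ 1/2` -/
lemma neg_log_ub {x : ℝ} (h0 : 0 ≤ x) (h1 : x ≤ 1 / 2) :
    -Real.log (1 - x) ≤ x + x ^ 2 := by
  have hx : |x| < 1 := by rw [abs_of_nonneg h0]; linarith
  have H := Real.abs_log_sub_add_sum_range_le hx 4
  rw [abs_of_nonneg h0] at H
  have hsum : (∑ i ∈ Finset.range 4, x ^ (i + 1) / (i + 1)) =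
      x + x ^ 2 / 2 + x ^ 3 / 3 + x ^ 4 / 4 := by
    simp [Finset.sum_range_succ]
    norm_num
  rw [hsum] at H
  have H2 := (abs_le.mp H).1
  have htail : x ^ 5 / (1 - x) ≤ 2 * x ^ 5 := by
    rw [div_le_iff₀ (by linarith)]
    nlinarith [pow_nonneg h0 5]
  nlinarith [pow_nonneg h0 2, pow_nonneg h0 3, pow_nonneg h0 4, pow_nonneg h0 5,
    mul_le_mul_of_nonneg_left h1 (pow_nonneg h0 2),
    mul_le_mul_of_nonneg_left h1 (pow_nonneg h0 3),
    mul_le_mul_of_nonneg_left h1 (pow_nonneg h0 4)]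

lemma sum_id (m : ℕ) : ∑ i ∈ Finset.range m, (i : ℝ) = m * (m - 1) / 2 := by
  induction m with
  | zero => simp
  | succ m ih => rw [Finset.sum_range_succ, ih]; push_cast; ring

lemma sum_sq (m : ℕ) :
    ∑ i ∈ Finset.range m, (i : ℝ) ^ 2 = m * (m - 1) * (2 * m - 1) / 6 := by
  induction m with
  | zero => simp
  | succ m ih => rw [Finset.sum_range_succ, ih]; push_cast; ring

end StmtAux2

set_option maxHeartbeats 1000000 in
theorem stmt_2 (n c : ℕ) (hn : 1 ≤ n) (hc : 1 ≤ c)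
    (t : ℕ → ℝ) (ht : StrictMono t) (ht0 : t 0 = 0)
    (hi : ((Bemb n t c - c : ℕ) : ℝ) < n / 2) :
    |((Bemb n t c - c : ℕ) : ℝ) ^ 2 / (2 * n) - t c| ≤
      ((Bemb n t c - c : ℕ) : ℝ) / (2 * n) +
        ((Bemb n t c - c : ℕ) : ℝ) ^ 3 / (3 * (n : ℝ) ^ 2) +
        2 * c * ((Bemb n t c - c : ℕ) : ℝ) / n := by
  obtain ⟨c', rfl⟩ : ∃ c', c = c' + 1 := ⟨c - 1, by omega⟩
  set m := Bemb n t (c' + 1) - (c' + 1) with hm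
  have hMm : StmtAux2.M n t (c' + 1) = m := by rw [hm]; rfl
  clear_value m
  set r : ℝ := (m : ℝ) with hr
  set N : ℝ := (n : ℝ) with hN
  set C : ℝ := (c' : ℝ) with hC
  have hN1 : (1 : ℝ) ≤ N := by rw [hN]; exact_mod_cast hn
  have hN0 : (0 : ℝ) < N := by linarith
  have hNe : N ≠ 0 := ne_of_gt hN0
  have hr0 : (0 : ℝ) ≤ r := Nat.cast_nonneg m
  have hC0 : (0 : ℝ) ≤ C := Nat.cast_nonneg c'
  have hrN : 2 * r < N := by
    have : r < N / 2 := hi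
    linarith
  have hmn : m < n := by
    have h' : r < N := by linarith
    rw [hr, hN] at h'
    exact_mod_cast h'
  -- the real-valued log function
  set g : ℕ → ℝ := fun i => -Real.log (1 - (i : ℝ) / n) with hg
  have hglb : ∀ i : ℕ, i < n → (i : ℝ) / N ≤ g i := by
    intro i hin
    apply StmtAux2.neg_log_lb
    rw [div_lt_one hN0, hN]
    exact_mod_cast hin
  have hgnn : ∀ i : ℕ, i < n → 0 ≤ g i := by
    intro i hin
    exact le_trans (by positivity) (hglb i hin)
  have hgub : ∀ i : ℕ, i ≤ m → g i ≤ (i : ℝ) / N + ((i : ℝ) / N) ^ 2 := by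
    intro i him
    apply StmtAux2.neg_log_ub (by positivity)
    have h1 : (i : ℝ) ≤ r := by rw [hr]; exact_mod_cast him
    rw [div_le_iff₀ hN0]
    linarith
  have hfEg : ∀ i : ℕ, i < n → fE n i = ENNReal.ofReal (g i) := by
    intro i hin
    unfold fE
    rw [if_pos hin]
  clear_value g
  -- convert the lower telescoped bound to reals
  set Sa : ℝ := ∑ i ∈ Finset.range m, g i with hSa_def
  set Sb : ℝ := ∑ i ∈ Finset.range (m + 1), g i with hSb_def
  clear_value Sa Sb
  have hSann : 0 ≤ Sa := by
    rw [hSa_def]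
    exact Finset.sum_nonneg fun i hi' => hgnn i (by have := Finset.mem_range.mp hi'; omega)
  have hSbnn : 0 ≤ Sb := by
    rw [hSb_def]
    exact Finset.sum_nonneg fun i hi' => hgnn i (by have := Finset.mem_range.mp hi'; omega)
  have hconv1 : ∑ i ∈ Finset.range m, fE n i = ENNReal.ofReal Sa := by
    rw [hSa_def, ENNReal.ofReal_sum_of_nonneg
      (fun i hi' => hgnn i (by have := Finset.mem_range.mp hi'; omega))]
    exact Finset.sum_congr rfl
      (fun i hi' => hfEg i (by have := Finset.mem_range.mp hi'; omega))
  have hconv2 : ∑ i ∈ Finset.range (m + 1), fE n i = ENNReal.ofReal Sb := by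
    rw [hSb_def, ENNReal.ofReal_sum_of_nonneg
      (fun i hi' => hgnn i (by have := Finset.mem_range.mp hi'; omega))]
    exact Finset.sum_congr rfl
      (fun i hi' => hfEg i (by have := Finset.mem_range.mp hi'; omega))
  have hAE := StmtAux2.tele_low n t ht ht0 c'
  rw [hMm, hconv1] at hAE
  have hA' : Sa < t (c' + 1) :=
    (ENNReal.ofReal_lt_ofReal_iff_of_nonneg hSann).mp hAE
  have hBE := StmtAux2.tele_up n t ht ht0 c'
  rw [hMm, hconv2, hfEg m hmn] at hBE
  have hcast : (c' : ℝ≥0∞) * ENNReal.ofReal (g m) = ENNReal.ofReal (C * g m) := by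
    rw [ENNReal.ofReal_mul hC0, ENNReal.ofReal_natCast]
  rw [hcast, ← ENNReal.ofReal_add hSbnn (mul_nonneg hC0 (hgnn m hmn))] at hBE
  have hB' : t (c' + 1) ≤ Sb + C * g m :=
    (ENNReal.ofReal_le_ofReal_iff (add_nonneg hSbnn (mul_nonneg hC0 (hgnn m hmn)))).mp hBE
  -- real sum bounds
  have hSalb : (r * (r - 1) / 2) / N ≤ Sa := by
    have h1 : ∑ i ∈ Finset.range m, (i : ℝ) / N ≤ Sa := by
      rw [hSa_def]
      exact Finset.sum_le_sum fun i hi' =>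
        hglb i (by have := Finset.mem_range.mp hi'; omega)
    have h2 : ∑ i ∈ Finset.range m, (i : ℝ) / N =
        (r * (r - 1) / 2) / N := by
      rw [← Finset.sum_div, StmtAux2.sum_id]
    linarith [h2 ▸ h1]
  have hSbub : Sb ≤ ((r + 1) * r / 2) / N + ((r + 1) * r * (2 * r + 1) / 6) / N ^ 2 := by
    have h1 : Sb ≤ ∑ i ∈ Finset.range (m + 1), ((i : ℝ) / N + ((i : ℝ) / N) ^ 2) := by
      rw [hSb_def]
      exact Finset.sum_le_sum fun i hi' =>
        hgub i (by have := Finset.mem_range.mp hi'; omega)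
    have h2 : ∑ i ∈ Finset.range (m + 1), ((i : ℝ) / N + ((i : ℝ) / N) ^ 2) =
        ((r + 1) * r / 2) / N + ((r + 1) * r * (2 * r + 1) / 6) / N ^ 2 := by
      rw [Finset.sum_add_distrib, ← Finset.sum_div]
      have e1 : ∑ i ∈ Finset.range (m + 1), ((i : ℝ) / N) ^ 2 =
          (∑ i ∈ Finset.range (m + 1), (i : ℝ) ^ 2) / N ^ 2 := by
        rw [Finset.sum_div]
        exact Finset.sum_congr rfl fun i _ => by rw [div_pow]
      rw [e1, StmtAux2.sum_id, StmtAux2.sum_sq, hr]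
      push_cast
      ring_nf
    linarith [h2 ▸ h1]
  have hgmub : g m ≤ r / N + (r / N) ^ 2 := hgub m le_rfl
  -- combined and cleared bounds
  have ht1 : (r * (r - 1) / 2) / N < t (c' + 1) := lt_of_le_of_lt hSalb hA'
  have h1c : 3 * N * (r * (r - 1)) < 6 * N ^ 2 * t (c' + 1) := by
    have e : 6 * N ^ 2 * ((r * (r - 1) / 2) / N) = 3 * N * (r * (r - 1)) := by
      field_simp; ring
    calc 3 * N * (r * (r - 1)) = 6 * N ^ 2 * ((r * (r - 1) / 2) / N) := e.symm
      _ < 6 * N ^ 2 * t (c' + 1) := by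
          exact mul_lt_mul_of_pos_left ht1 (by positivity)
  have ht2 : t (c' + 1) ≤ ((r + 1) * r / 2) / N + ((r + 1) * r * (2 * r + 1) / 6) / N ^ 2
      + C * (r / N + (r / N) ^ 2) := by
    have := mul_le_mul_of_nonneg_left hgmub hC0
    linarith
  have h2c : 6 * N ^ 2 * t (c' + 1) ≤
      3 * N * ((r + 1) * r) + (r + 1) * r * (2 * r + 1) + 6 * C * (N * r + r ^ 2) := by
    have e : 6 * N ^ 2 * (((r + 1) * r / 2) / N + ((r + 1) * r * (2 * r + 1) / 6) / N ^ 2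
        + C * (r / N + (r / N) ^ 2)) =
        3 * N * ((r + 1) * r) + (r + 1) * r * (2 * r + 1) + 6 * C * (N * r + r ^ 2) := by
      field_simp; ring
    calc 6 * N ^ 2 * t (c' + 1) ≤ 6 * N ^ 2 * (((r + 1) * r / 2) / N
        + ((r + 1) * r * (2 * r + 1) / 6) / N ^ 2 + C * (r / N + (r / N) ^ 2)) :=
          mul_le_mul_of_nonneg_left ht2 (by positivity)
      _ = _ := e
  -- finish
  have hcc : ((c' + 1 : ℕ) : ℝ) = C + 1 := by push_cast; ring
  rw [abs_le]
  constructor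
  · rw [← sub_nonneg]
    have e : r ^ 2 / (2 * N) - t (c' + 1) -
        -(r / (2 * N) + r ^ 3 / (3 * N ^ 2) + 2 * ((c' + 1 : ℕ) : ℝ) * r / N) =
        (3 * N * r ^ 2 - 6 * N ^ 2 * t (c' + 1) + 3 * N * r + 2 * r ^ 3
          + 12 * (C + 1) * r * N) / (6 * N ^ 2) := by
      rw [hcc]; field_simp; ring
    rw [e]
    apply div_nonneg _ (by positivity)
    nlinarith [h2c, mul_nonneg (by linarith : (0:ℝ) ≤ N - 2 * r) hr0,
      mul_nonneg hC0 (mul_nonneg (by linarith : (0:ℝ) ≤ N - 2 * r) hr0),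
      mul_nonneg (by linarith : (0:ℝ) ≤ N - 1) hr0,
      mul_nonneg hr0 (le_of_lt hN0), mul_nonneg hC0 (mul_nonneg hr0 (le_of_lt hN0))]
  · rw [← sub_nonneg]
    have e : r / (2 * N) + r ^ 3 / (3 * N ^ 2) + 2 * ((c' + 1 : ℕ) : ℝ) * r / N -
        (r ^ 2 / (2 * N) - t (c' + 1)) =
        (6 * N ^ 2 * t (c' + 1) - 3 * N * r ^ 2 + 3 * N * r + 2 * r ^ 3
          + 12 * (C + 1) * r * N) / (6 * N ^ 2) := by
      rw [hcc]; field_simp; ring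
    rw [e]
    apply div_nonneg _ (by positivity)
    nlinarith [h1c, pow_nonneg hr0 3, mul_nonneg hr0 (le_of_lt hN0),
      mul_nonneg hC0 (mul_nonneg hr0 (le_of_lt hN0))]
end

section
/- Let ω = (t_1, t_2, …) be any strictly increasing sequence of positive reals. Then for every fixed integer c ≥ 1, B(c,n)(ω)/√(2n) → √(t_c) as n → ∞. -/
open MeasureTheory Filter Topology
open scoped ENNReal NNReal

private lemma neg_log_ge (x : ℝ) (h0 : 0 ≤ x) (h1 : x < 1) : x ≤ -Real.log (1 - x) := by
  have h : Real.log (1 - x) ≤ (1 - x) - 1 := Real.log_le_sub_one_of_pos (by linarith)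
  linarith

private lemma neg_log_le (x : ℝ) (h0 : 0 ≤ x) (h1 : x < 1) :
    -Real.log (1 - x) ≤ x / (1 - x) := by
  have hx : (0:ℝ) < 1 - x := by linarith
  have h : Real.log (1 - x)⁻¹ ≤ (1 - x)⁻¹ - 1 := Real.log_le_sub_one_of_pos (by positivity)
  rw [Real.log_inv] at h
  have h2 : (1-x)⁻¹ - 1 = x / (1-x) := by field_simp; ring
  linarith

private lemma sum_range_id' (n : ℕ) : ∑ i ∈ Finset.range n, (i:ℝ) = ((n:ℝ)^2 - n)/2 := by
  induction n with
  | zero => simp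
  | succ n ih => rw [Finset.sum_range_succ, ih]; push_cast; ring

private lemma sum_Ico_id (J M : ℕ) (h : J ≤ M) :
    ∑ i ∈ Finset.Ico J M, (i:ℝ) = ((M:ℝ)^2 - M - (J:ℝ)^2 + J)/2 := by
  rw [Finset.sum_Ico_eq_sub _ h, sum_range_id', sum_range_id']; ring

private lemma sum_fE_eq (n a b : ℕ) (hb : b ≤ n) :
    ∑ i ∈ Finset.Ico a b, fE n i
      = ENNReal.ofReal (∑ i ∈ Finset.Ico a b, (-Real.log (1 - (i:ℝ)/n))) := by
  rw [ENNReal.ofReal_sum_of_nonneg]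
  · apply Finset.sum_congr rfl
    intro i hi
    have hin : i < n := lt_of_lt_of_le (Finset.mem_Ico.mp hi).2 hb
    simp [fE, hin]
  · intro i hi
    have hin : i < n := lt_of_lt_of_le (Finset.mem_Ico.mp hi).2 hb
    have hn0 : (0:ℝ) < n := by exact_mod_cast Nat.pos_of_ne_zero (by omega)
    have h1 : (i:ℝ)/n < 1 := by rw [div_lt_one hn0]; exact_mod_cast hin
    have h0 : 0 ≤ (i:ℝ)/n := by positivity
    linarith [neg_log_ge ((i:ℝ)/n) h0 h1]

private lemma succ_mem_set (n a : ℕ) (d : ℝ≥0∞) :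
    (n+1) ∈ {j : ℕ | 1 ≤ j ∧ d ≤ ∑ i ∈ Finset.Ico a (a + j), fE n i} := by
  refine ⟨Nat.succ_le_succ (Nat.zero_le n), ?_⟩
  have hmem : max a n ∈ Finset.Ico a (a + (n+1)) := by
    simp only [Finset.mem_Ico]
    omega
  have htop : fE n (max a n) = ⊤ := by
    simp [fE, Nat.not_lt.mpr (le_max_right a n)]
  calc d ≤ ⊤ := le_top
    _ = fE n (max a n) := htop.symm
    _ ≤ ∑ i ∈ Finset.Ico a (a + (n+1)), fE n i :=
        Finset.single_le_sum (fun i _ => zero_le) hmem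

private lemma le_Bemb (n : ℕ) (t : ℕ → ℝ) (c : ℕ) : c ≤ Bemb n t c := by
  induction c with
  | zero => simp
  | succ c ih =>
    have h1 : 1 ≤ sInf {j : ℕ | 1 ≤ j ∧
        ENNReal.ofReal (t (c + 1) - t c) ≤
          ∑ i ∈ Finset.Ico (Bemb n t c - c) (Bemb n t c - c + j), fE n i} :=
      (Nat.sInf_mem ⟨_, succ_mem_set n _ _⟩).1
    show c + 1 ≤ Bemb n t c + _
    omega

set_option maxHeartbeats 1000000 in
private lemma key_s3 (A Δ : ℝ) (hA : 0 ≤ A) (hΔ : 0 < Δ) (J : ℕ → ℕ)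
    (hJ : Tendsto (fun n : ℕ => ((J n : ℝ))^2 / (2*(n:ℝ))) atTop (nhds A)) :
    Tendsto (fun n : ℕ => (((J n + sInf {j : ℕ | 1 ≤ j ∧
        ENNReal.ofReal Δ ≤ ∑ i ∈ Finset.Ico (J n) (J n + j), fE n i} : ℕ)) : ℝ)^2 / (2*(n:ℝ)))
      atTop (nhds (A + Δ)) := by
  set s : ℕ → ℕ := fun n => sInf {j : ℕ | 1 ≤ j ∧
      ENNReal.ofReal Δ ≤ ∑ i ∈ Finset.Ico (J n) (J n + j), fE n i} with hs
  set M : ℕ → ℕ := fun n => J n + s n with hM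
  have hsdef : ∀ n, s n = sInf {j : ℕ | 1 ≤ j ∧
      ENNReal.ofReal Δ ≤ ∑ i ∈ Finset.Ico (J n) (J n + j), fE n i} := fun n => rfl
  have hMdef : ∀ n, M n = J n + s n := fun n => rfl
  show Tendsto (fun n : ℕ => ((M n : ℕ) : ℝ)^2 / (2*(n:ℝ))) atTop (nhds (A + Δ))
  have hmem : ∀ n, s n ∈ {j : ℕ | 1 ≤ j ∧
      ENNReal.ofReal Δ ≤ ∑ i ∈ Finset.Ico (J n) (J n + j), fE n i} := by
    intro n
    rw [hsdef n]
    exact Nat.sInf_mem ⟨_, succ_mem_set n (J n) _⟩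
  have hs1 : ∀ n, 1 ≤ s n := fun n => (hmem n).1
  have hsle : ∀ n, s n ≤ n + 1 := by
    intro n
    rw [hsdef n]
    exact Nat.sInf_le (succ_mem_set n (J n) _)
  -- (★U)
  have hU : ∀ n, 1 ≤ n → ((M n:ℝ))^2 ≤ ((J n:ℝ))^2 + 2*(n:ℝ)*Δ + 4*((M n:ℝ)) := by
    intro n hn
    have hn0 : (0:ℝ) < n := by exact_mod_cast hn
    rcases eq_or_lt_of_le (hs1 n) with h1 | h2
    · have hMn : M n = J n + 1 := by rw [hMdef n, ← h1]
      rw [hMn]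
      push_cast
      have hnΔ : 0 ≤ (n:ℝ)*Δ := by positivity
      nlinarith [(Nat.cast_nonneg (J n) : (0:ℝ) ≤ (J n:ℝ))]
    · have hnot : s n - 1 ∉ {j : ℕ | 1 ≤ j ∧
          ENNReal.ofReal Δ ≤ ∑ i ∈ Finset.Ico (J n) (J n + j), fE n i} := by
        apply Nat.notMem_of_lt_sInf
        rw [← hsdef n]
        omega
      have hlt : ∑ i ∈ Finset.Ico (J n) (J n + (s n - 1)), fE n i < ENNReal.ofReal Δ := by
        by_contra h
        exact hnot ⟨by omega, not_lt.mp h⟩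
      set K := J n + (s n - 1) with hK
      have hiK : ∀ i ∈ Finset.Ico (J n) K, i < n := by
        intro i hi
        by_contra hin
        have htop : fE n i = ⊤ := by simp [fE]; omega
        have hle : (⊤:ℝ≥0∞) ≤ ∑ i ∈ Finset.Ico (J n) K, fE n i :=
          htop ▸ Finset.single_le_sum (fun _ _ => zero_le) hi
        exact absurd (lt_of_le_of_lt hle (hlt.trans ENNReal.ofReal_lt_top)) (lt_irrefl _)
      have hJK : J n < K := by have := hs1 n; omega
      have hKn : K ≤ n := by
        have := hiK (K-1) (by simp only [Finset.mem_Ico]; omega)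
        omega
      rw [sum_fE_eq n (J n) K hKn] at hlt
      have hreal : ∑ i ∈ Finset.Ico (J n) K, (-Real.log (1 - (i:ℝ)/n)) < Δ :=
        (ENNReal.ofReal_lt_ofReal_iff hΔ).mp hlt
      have hterm : ∀ i ∈ Finset.Ico (J n) K, (i:ℝ)/n ≤ -Real.log (1 - (i:ℝ)/n) := by
        intro i hi
        have hin : i < n := hiK i hi
        exact neg_log_ge _ (by positivity) (by rw [div_lt_one hn0]; exact_mod_cast hin)
      have hsum2 : ∑ i ∈ Finset.Ico (J n) K, ((i:ℝ)/n) < Δ :=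
        lt_of_le_of_lt (Finset.sum_le_sum hterm) hreal
      rw [← Finset.sum_div, sum_Ico_id _ _ hJK.le] at hsum2
      have hKK : ((K:ℝ)^2 - K - ((J n:ℝ))^2 + (J n:ℝ)) < 2*(n:ℝ)*Δ := by
        rw [div_lt_iff₀ hn0] at hsum2
        nlinarith
      have hMK : M n = K + 1 := by rw [hMdef n, hK]; omega
      rw [hMK]
      push_cast
      have hJ0 : (0:ℝ) ≤ (J n:ℝ) := Nat.cast_nonneg _
      have hK0 : (0:ℝ) ≤ (K:ℝ) := Nat.cast_nonneg _
      nlinarith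
  -- crude bound
  set D : ℝ := 2*A + 2*Δ + 14 with hD
  have hDpos : (0:ℝ) < D := by positivity
  have hEJ : ∀ᶠ n in atTop, ((J n:ℝ))^2 ≤ 2*(n:ℝ)*(A+1) := by
    filter_upwards [hJ.eventually (gt_mem_nhds (by linarith : A < A+1)),
      eventually_ge_atTop 1] with n h1 h2
    have hn0 : (0:ℝ) < n := by exact_mod_cast h2
    have := (div_lt_iff₀ (by positivity : (0:ℝ) < 2*(n:ℝ))).mp h1
    nlinarith
  have hcrude : ∀ᶠ n in atTop, (M n:ℝ) ≤ Real.sqrt D * Real.sqrt n := by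
    filter_upwards [hEJ, eventually_ge_atTop 1, eventually_ge_atTop ⌈2*(A+1)⌉₊]
      with n h1 h2 h3
    have hn0 : (0:ℝ) < n := by exact_mod_cast h2
    have h2A : 2*(A+1) ≤ (n:ℝ) := le_trans (Nat.le_ceil _) (by exact_mod_cast h3)
    have hJn : (J n:ℝ) ≤ n := by nlinarith [(Nat.cast_nonneg (J n) : (0:ℝ) ≤ (J n:ℝ))]
    have hMle : (M n:ℝ) ≤ 3*(n:ℝ) := by
      have hM1 : M n ≤ J n + n + 1 := by have := hsle n; have := hMdef n; omega
      have h4 : (M n:ℝ) ≤ (J n:ℝ) + n + 1 := by exact_mod_cast hM1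
      have h1n : (1:ℝ) ≤ n := by exact_mod_cast h2
      linarith
    have hM2 : (M n:ℝ)^2 ≤ D * n := by
      have := hU n h2
      nlinarith
    have hMD : (M n:ℝ) ≤ Real.sqrt (D*n) := by
      rw [← Real.sqrt_sq (Nat.cast_nonneg (M n))]
      exact Real.sqrt_le_sqrt hM2
    rwa [Real.sqrt_mul hDpos.le] at hMD
  have hsqn : Tendsto (fun n : ℕ => Real.sqrt n) atTop atTop := by
    apply tendsto_atTop_atTop.mpr
    intro b
    refine ⟨⌈b^2⌉₊, fun n hn => ?_⟩
    have h1 : (b^2 : ℝ) ≤ n := le_trans (Nat.le_ceil _) (by exact_mod_cast hn)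
    calc b ≤ Real.sqrt (b^2) := by rw [Real.sqrt_sq_eq_abs]; exact le_abs_self b
      _ ≤ Real.sqrt n := Real.sqrt_le_sqrt h1
  have hsqrtn : Tendsto (fun n : ℕ => Real.sqrt D / Real.sqrt n) atTop (nhds 0) := by
    simp only [div_eq_mul_inv]
    simpa using (hsqn.inv_tendsto_atTop).const_mul (Real.sqrt D)
  have hMdivn : Tendsto (fun n : ℕ => (M n:ℝ)/n) atTop (nhds 0) := by
    apply tendsto_of_tendsto_of_tendsto_of_le_of_le' tendsto_const_nhds hsqrtn
    · exact Eventually.of_forall fun n => by positivity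
    · filter_upwards [hcrude, eventually_ge_atTop 1] with n h1 h2
      have hn0 : (0:ℝ) < n := by exact_mod_cast h2
      rw [div_le_div_iff₀ hn0 (Real.sqrt_pos.mpr hn0)]
      calc (M n:ℝ) * Real.sqrt n ≤ (Real.sqrt D * Real.sqrt n) * Real.sqrt n := by
            apply mul_le_mul_of_nonneg_right h1 (Real.sqrt_nonneg _)
        _ = Real.sqrt D * n := by rw [mul_assoc, Real.mul_self_sqrt hn0.le]
  have hJdiv : Tendsto (fun n : ℕ => (J n:ℝ)/(2*(n:ℝ))) atTop (nhds 0) := by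
    apply tendsto_of_tendsto_of_tendsto_of_le_of_le' tendsto_const_nhds hMdivn
    · exact Eventually.of_forall fun n => by positivity
    · filter_upwards [eventually_ge_atTop 1] with n h2
      have hn0 : (0:ℝ) < n := by exact_mod_cast h2
      have hJM : (J n:ℝ) ≤ (M n:ℝ) := by
        have : J n ≤ M n := by have := hMdef n; omega
        exact_mod_cast this
      rw [div_le_div_iff₀ (by positivity) hn0]
      nlinarith [(Nat.cast_nonneg (J n) : (0:ℝ) ≤ (J n:ℝ))]
  have hMln : ∀ᶠ n in atTop, M n < n := by
    filter_upwards [hcrude, eventually_ge_atTop 1, eventually_ge_atTop (⌈D⌉₊+1)]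
      with n h1 h2 h3
    have hn0 : (0:ℝ) < n := by exact_mod_cast h2
    have hDn : D < (n:ℝ) := by
      have : (⌈D⌉₊ : ℝ) < n := by exact_mod_cast h3
      linarith [Nat.le_ceil D]
    have hfin : (M n:ℝ) < n := by
      rw [← Real.sqrt_mul hDpos.le] at h1
      calc (M n:ℝ) ≤ Real.sqrt (D*n) := h1
        _ < Real.sqrt ((n:ℝ)*n) := Real.sqrt_lt_sqrt (by positivity) (by nlinarith)
        _ = n := by rw [Real.sqrt_mul_self hn0.le]
    exact_mod_cast hfin
  -- lower eventual inequality
  have hL : ∀ᶠ n in atTop,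
      Δ*(1 - (M n:ℝ)/n) + ((J n:ℝ))^2/(2*(n:ℝ)) - (J n:ℝ)/(2*(n:ℝ))
        ≤ ((M n:ℝ))^2/(2*(n:ℝ)) := by
    filter_upwards [hMln, eventually_ge_atTop 1] with n hMn hn1
    have hn0 : (0:ℝ) < n := by exact_mod_cast hn1
    have hMem := (hmem n).2
    rw [show J n + s n = M n from (hMdef n).symm] at hMem
    rw [sum_fE_eq n (J n) (M n) (le_of_lt hMn)] at hMem
    have hsnn : 0 ≤ ∑ i ∈ Finset.Ico (J n) (M n), (-Real.log (1 - (i:ℝ)/n)) := by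
      apply Finset.sum_nonneg
      intro i hi
      have hin : i < n := lt_of_lt_of_le (Finset.mem_Ico.mp hi).2 (le_of_lt hMn)
      have h01 : (i:ℝ)/n < 1 := by rw [div_lt_one hn0]; exact_mod_cast hin
      have hx0 : (0:ℝ) ≤ (i:ℝ)/n := by positivity
      linarith [neg_log_ge ((i:ℝ)/n) hx0 h01]
    have hΔle : Δ ≤ ∑ i ∈ Finset.Ico (J n) (M n), (-Real.log (1 - (i:ℝ)/n)) :=
      (ENNReal.ofReal_le_ofReal_iff hsnn).mp hMem
    have hMn1 : 0 < 1 - (M n:ℝ)/n := by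
      rw [sub_pos, div_lt_one hn0]
      exact_mod_cast hMn
    have hub : ∀ i ∈ Finset.Ico (J n) (M n),
        -Real.log (1 - (i:ℝ)/n) ≤ ((i:ℝ)/n) / (1 - (M n:ℝ)/n) := by
      intro i hi
      have hiM : i < M n := (Finset.mem_Ico.mp hi).2
      have hin : i < n := lt_of_lt_of_le hiM (le_of_lt hMn)
      have hx1 : (i:ℝ)/n < 1 := by rw [div_lt_one hn0]; exact_mod_cast hin
      have hx0 : (0:ℝ) ≤ (i:ℝ)/n := by positivity
      refine le_trans (neg_log_le _ hx0 hx1) ?_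
      apply div_le_div_of_nonneg_left hx0 hMn1
      have hiM' : (i:ℝ) ≤ (M n:ℝ) := by exact_mod_cast hiM.le
      have hdd : (i:ℝ)/n ≤ (M n:ℝ)/n := by gcongr
      linarith
    have hsum : Δ ≤ (∑ i ∈ Finset.Ico (J n) (M n), ((i:ℝ)/n)) / (1 - (M n:ℝ)/n) := by
      calc Δ ≤ ∑ i ∈ Finset.Ico (J n) (M n), (-Real.log (1 - (i:ℝ)/n)) := hΔle
        _ ≤ ∑ i ∈ Finset.Ico (J n) (M n), ((i:ℝ)/n) / (1 - (M n:ℝ)/n) :=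
            Finset.sum_le_sum hub
        _ = (∑ i ∈ Finset.Ico (J n) (M n), ((i:ℝ)/n)) / (1 - (M n:ℝ)/n) := by
            rw [Finset.sum_div]
    have hJleM : J n ≤ M n := by have := hMdef n; omega
    rw [le_div_iff₀ hMn1, ← Finset.sum_div, sum_Ico_id (J n) (M n) hJleM] at hsum
    have hfin : Δ * (1 - (M n:ℝ)/n) * (2*(n:ℝ))
        ≤ (M n:ℝ)^2 - (M n:ℝ) - ((J n:ℝ))^2 + (J n:ℝ) := by
      have h := mul_le_mul_of_nonneg_right hsum (le_of_lt hn0)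
      rw [div_mul_cancel₀ _ (ne_of_gt hn0)] at h
      nlinarith
    rw [← sub_nonneg]
    have heq : ((M n:ℝ))^2/(2*(n:ℝ)) -
        (Δ*(1 - (M n:ℝ)/n) + ((J n:ℝ))^2/(2*(n:ℝ)) - (J n:ℝ)/(2*(n:ℝ)))
        = ((M n:ℝ)^2 - Δ*(1 - (M n:ℝ)/n)*(2*(n:ℝ)) - ((J n:ℝ))^2 + (J n:ℝ))/(2*(n:ℝ)) := by
      field_simp
      ring
    rw [heq]
    apply div_nonneg _ (by positivity)
    have hM0 : (0:ℝ) ≤ (M n:ℝ) := Nat.cast_nonneg _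
    linarith
  -- upper eventual inequality
  have hUu : ∀ᶠ n in atTop, ((M n:ℝ))^2/(2*(n:ℝ))
      ≤ ((J n:ℝ))^2/(2*(n:ℝ)) + Δ + 2*((M n:ℝ)/n) := by
    filter_upwards [eventually_ge_atTop 1] with n hn1
    have hn0 : (0:ℝ) < n := by exact_mod_cast hn1
    have h := hU n hn1
    rw [← sub_nonneg]
    have heq : ((J n:ℝ))^2/(2*(n:ℝ)) + Δ + 2*((M n:ℝ)/n) - ((M n:ℝ))^2/(2*(n:ℝ))
        = (((J n:ℝ))^2 + 2*(n:ℝ)*Δ + 4*(M n:ℝ) - ((M n:ℝ))^2)/(2*(n:ℝ)) := by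
      field_simp
      ring
    rw [heq]
    apply div_nonneg _ (by positivity)
    linarith
  have hlower : Tendsto (fun n : ℕ =>
      Δ*(1 - (M n:ℝ)/n) + ((J n:ℝ))^2/(2*(n:ℝ)) - (J n:ℝ)/(2*(n:ℝ)))
      atTop (nhds (A + Δ)) := by
    have h1 : Tendsto (fun n : ℕ => Δ*(1 - (M n:ℝ)/n)) atTop (nhds Δ) := by
      have h2 := (hMdivn.const_sub 1).const_mul Δ
      simpa using h2
    have h3 := (h1.add hJ).sub hJdiv
    simpa [add_comm] using h3
  have hupper : Tendsto (fun n : ℕ =>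
      ((J n:ℝ))^2/(2*(n:ℝ)) + Δ + 2*((M n:ℝ)/n)) atTop (nhds (A + Δ)) := by
    have h4 := (hJ.add (tendsto_const_nhds (x := Δ))).add (hMdivn.const_mul 2)
    simpa using h4
  exact tendsto_of_tendsto_of_tendsto_of_le_of_le' hlower hupper hL hUu

theorem stmt_3 (t : ℕ → ℝ) (ht : StrictMono t) (ht0 : t 0 = 0) (c : ℕ) (hc : 1 ≤ c) :
    Tendsto (fun n : ℕ => (Bemb n t c : ℝ) / Real.sqrt (2 * n)) atTop
      (nhds (Real.sqrt (t c))) := by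
  clear hc
  induction c with
  | zero =>
    simp only [Bemb, Nat.cast_zero, zero_div, ht0, Real.sqrt_zero]
    exact tendsto_const_nhds
  | succ c ih =>
    have htc0 : 0 ≤ t c := by
      have h := ht.monotone (Nat.zero_le c)
      linarith
    have hΔ : 0 < t (c+1) - t c := sub_pos.mpr (ht (Nat.lt_succ_self c))
    have hle : ∀ n, c ≤ Bemb n t c := fun n => le_Bemb n t c
    have hsq2 : Tendsto (fun n : ℕ => Real.sqrt (2 * (n:ℝ))) atTop atTop := by
      apply tendsto_atTop_atTop.mpr
      intro b
      refine ⟨⌈b^2⌉₊, fun n hn => ?_⟩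
      have h1 : (b^2 : ℝ) ≤ n := le_trans (Nat.le_ceil _) (by exact_mod_cast hn)
      have h2 : (b^2 : ℝ) ≤ 2*(n:ℝ) := by
        have : (0:ℝ) ≤ n := Nat.cast_nonneg n
        linarith
      calc b ≤ Real.sqrt (b^2) := by rw [Real.sqrt_sq_eq_abs]; exact le_abs_self b
        _ ≤ Real.sqrt (2*(n:ℝ)) := Real.sqrt_le_sqrt h2
    have hc0 : Tendsto (fun n : ℕ => (c:ℝ) / Real.sqrt (2 * (n:ℝ))) atTop (nhds 0) := by
      simp only [div_eq_mul_inv]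
      simpa using (hsq2.inv_tendsto_atTop).const_mul (c:ℝ)
    have hJt : Tendsto (fun n : ℕ => ((Bemb n t c - c : ℕ) : ℝ) / Real.sqrt (2*(n:ℝ)))
        atTop (nhds (Real.sqrt (t c))) := by
      have heq : ∀ n : ℕ, ((Bemb n t c - c : ℕ) : ℝ) / Real.sqrt (2*(n:ℝ))
          = (Bemb n t c : ℝ)/Real.sqrt (2*(n:ℝ)) - (c:ℝ)/Real.sqrt (2*(n:ℝ)) := by
        intro n
        rw [Nat.cast_sub (hle n), sub_div]
      simp only [heq]
      simpa using ih.sub hc0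
    have hJ2 : Tendsto (fun n : ℕ => (((Bemb n t c - c : ℕ)):ℝ)^2 / (2*(n:ℝ)))
        atTop (nhds (t c)) := by
      have h := hJt.mul hJt
      rw [Real.mul_self_sqrt htc0] at h
      have heq : ∀ n : ℕ, ((Bemb n t c - c:ℕ):ℝ)/Real.sqrt (2*(n:ℝ))
          * (((Bemb n t c - c:ℕ):ℝ)/Real.sqrt (2*(n:ℝ)))
          = ((Bemb n t c - c:ℕ):ℝ)^2/(2*(n:ℝ)) := by
        intro n
        rw [div_mul_div_comm, Real.mul_self_sqrt (by positivity), ← sq]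
      simp only [heq] at h
      exact h
    have hkey := key_s3 (t c) (t (c+1) - t c) htc0 hΔ (fun n => Bemb n t c - c) hJ2
    rw [show t c + (t (c+1) - t c) = t (c+1) by ring] at hkey
    have hg : Tendsto (fun n : ℕ => ((Bemb n t c - c + sInf {j : ℕ | 1 ≤ j ∧
        ENNReal.ofReal (t (c+1) - t c) ≤
          ∑ i ∈ Finset.Ico (Bemb n t c - c) (Bemb n t c - c + j), fE n i} : ℕ) : ℝ)
        / Real.sqrt (2*(n:ℝ))) atTop (nhds (Real.sqrt (t (c+1)))) := by
      have h := hkey.sqrt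
      have heq : ∀ (m : ℕ) (n : ℕ), Real.sqrt ((m:ℝ)^2/(2*(n:ℝ))) = (m:ℝ)/Real.sqrt (2*(n:ℝ)) := by
        intro m n
        rw [Real.sqrt_div (sq_nonneg _), Real.sqrt_sq (Nat.cast_nonneg m)]
      simp only [heq] at h
      exact h
    have hBsucc : ∀ n : ℕ, (Bemb n t (c+1) : ℝ) = ((Bemb n t c - c + sInf {j : ℕ | 1 ≤ j ∧
        ENNReal.ofReal (t (c+1) - t c) ≤
          ∑ i ∈ Finset.Ico (Bemb n t c - c) (Bemb n t c - c + j), fE n i} : ℕ) : ℝ) + c := by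
      intro n
      have h1 : Bemb n t (c+1) = Bemb n t c + sInf {j : ℕ | 1 ≤ j ∧
          ENNReal.ofReal (t (c+1) - t c) ≤
            ∑ i ∈ Finset.Ico (Bemb n t c - c) (Bemb n t c - c + j), fE n i} := rfl
      have h2 := hle n
      rw [h1]
      push_cast [Nat.cast_sub h2]
      ring
    have hfinal : (fun n : ℕ => (Bemb n t (c+1):ℝ)/Real.sqrt (2*(n:ℝ)))
        = fun n : ℕ => ((Bemb n t c - c + sInf {j : ℕ | 1 ≤ j ∧
            ENNReal.ofReal (t (c+1) - t c) ≤
              ∑ i ∈ Finset.Ico (Bemb n t c - c) (Bemb n t c - c + j), fE n i} : ℕ) : ℝ)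
            / Real.sqrt (2*(n:ℝ)) + (c:ℝ)/Real.sqrt (2*(n:ℝ)) := by
      funext n
      rw [hBsucc n, add_div]
    show Tendsto (fun n : ℕ => (Bemb n t (c+1):ℝ)/Real.sqrt (2*(n:ℝ))) atTop
      (nhds (Real.sqrt (t (c+1))))
    rw [hfinal]
    simpa using hg.add hc0
end

section
/- In the balls-in-bins model, for all integers b ≥ 1, n ≥ 1 and 0 ≤ y ≤ b−1, the probability that exactly y collisions occur after b throws satisfies P(C(b,n) = y) ≤ binom(b,y) · b^y · (n)_{b−y} / n^b, where (n)_m := n(n−1)⋯(n−m+1) denotes the falling factorial (equal to 0 when m > n). -/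
open MeasureTheory ProbabilityTheory Filter Topology
open scoped ENNReal NNReal

/-- Number of collisions after `b` throws, `C(b,n) = b - |{X_1,…,X_b}|`. -/
def collisions {Ω : Type*} (X : ℕ → Ω → ℕ) (b : ℕ) (ω : Ω) : ℕ :=
  b - ((Finset.range b).image fun i => X i ω).card

/-- `B(c,n) = inf { b : C(b,n) ≥ c }` in the balls-in-bins model. -/
noncomputable def ballsB {Ω : Type*} (X : ℕ → Ω → ℕ) (c : ℕ) (ω : Ω) : ℕ :=
  sInf {b : ℕ | c ≤ collisions X b ω}

/-- The uniform distribution on the bins `{1, …, n}`, as a measure on `ℕ`. -/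
noncomputable def unifBins (n : ℕ) : Measure ℕ :=
  ((n : ℝ≥0∞))⁻¹ • ∑ k ∈ Finset.Icc 1 n, Measure.dirac k

/-! ### Auxiliary combinatorics -/

section Aux

variable {b n y : ℕ}

lemma natCount (g : ℕ → ℕ) (m : ℕ) :
    ((Finset.range m).image g).card
      + ((Finset.range m).filter (fun i => ∃ j < i, g j = g i)).card = m := by
  induction m with
  | zero => simp
  | succ m ih =>
    rw [Finset.range_add_one, Finset.image_insert, Finset.filter_insert]
    by_cases h : ∃ j < m, g j = g m
    · have hmem : g m ∈ (Finset.range m).image g := by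
        obtain ⟨j, hj, hje⟩ := h
        exact Finset.mem_image.2 ⟨j, Finset.mem_range.2 hj, hje⟩
      rw [if_pos h, Finset.insert_eq_self.2 hmem,
        Finset.card_insert_of_notMem (by simp)]
      omega
    · have hmem : g m ∉ (Finset.range m).image g := by
        intro hc
        obtain ⟨j, hj, hje⟩ := Finset.mem_image.1 hc
        exact h ⟨j, Finset.mem_range.1 hj, hje⟩
      rw [if_neg h, Finset.card_insert_of_notMem hmem]
      omega

/-- Set of collision indices of a tuple. -/
def collSet (v : Fin b → ℕ) : Finset (Fin b) :=
  Finset.univ.filter (fun i => ∃ j, j < i ∧ v j = v i)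

/-- Extension of a tuple to `ℕ`. -/
def vext (v : Fin b → ℕ) (i : ℕ) : ℕ := if h : i < b then v ⟨i, h⟩ else 0

lemma image_card_add_collSet_card (v : Fin b → ℕ) :
    (Finset.univ.image v).card + (collSet v).card = b := by
  have h1 : (Finset.range b).image (vext v) = Finset.univ.image v := by
    ext x
    simp only [Finset.mem_image, Finset.mem_range, Finset.mem_univ, true_and]
    constructor
    · rintro ⟨i, hi, rfl⟩; exact ⟨⟨i, hi⟩, by simp [vext, hi]⟩
    · rintro ⟨i, rfl⟩; exact ⟨i.1, i.2, by simp [vext, i.2]⟩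
  have h2 : (collSet v).image Fin.val
      = (Finset.range b).filter (fun i => ∃ j < i, vext v j = vext v i) := by
    ext m
    simp only [collSet, Finset.mem_image, Finset.mem_filter, Finset.mem_univ, true_and,
      Finset.mem_range]
    constructor
    · rintro ⟨i, ⟨j, hj, hje⟩, rfl⟩
      refine ⟨i.2, j.1, hj, ?_⟩
      simp [vext, j.2, i.2, hje]
    · rintro ⟨hm, j, hj, hje⟩
      refine ⟨⟨m, hm⟩, ⟨⟨j, by omega⟩, hj, ?_⟩, rfl⟩
      simpa [vext, hm, show j < b by omega] using hje
  have h3 : (collSet v).card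
      = ((Finset.range b).filter (fun i => ∃ j < i, vext v j = vext v i)).card := by
    rw [← h2, Finset.card_image_of_injective _ Fin.val_injective]
  rw [← h1, h3]
  exact natCount (vext v) b

lemma collSet_card (v : Fin b → ℕ) (h : b - (Finset.univ.image v).card = y) :
    (collSet v).card = y := by
  have := image_card_add_collSet_card v
  omega

/-- Canonical earlier collision partner. -/
noncomputable def pick (v : Fin b → ℕ) (i : Fin b) : Fin b :=
  if h : ∃ j, j < i ∧ v j = v i then h.choose else i

lemma pick_spec {v : Fin b → ℕ} {i : Fin b} (h : ∃ j, j < i ∧ v j = v i) :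
    pick v i < i ∧ v (pick v i) = v i := by
  rw [pick, dif_pos h]
  exact ⟨h.choose_spec.1, h.choose_spec.2⟩

lemma injOn_of_not_coll {v : Fin b → ℕ} {i₁ i₂ : Fin b}
    (h1 : i₁ ∉ collSet v) (h2 : i₂ ∉ collSet v) (he : v i₁ = v i₂) : i₁ = i₂ := by
  simp only [collSet, Finset.mem_filter, Finset.mem_univ, true_and, not_exists] at h1 h2
  rcases lt_trichotomy i₁ i₂ with h | h | h
  · exact absurd ⟨h, he⟩ (h2 i₁)
  · exact h
  · exact absurd ⟨h, he.symm⟩ (h1 i₂)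

/-- Tuples of bin values with exactly `y` collisions. -/
def tupF (b n y : ℕ) : Finset (Fin b → ℕ) :=
  (Fintype.piFinset fun _ => Finset.Icc 1 n).filter
    (fun v => b - (Finset.univ.image v).card = y)

lemma fiber_card_le (S : Finset (Fin b)) :
    ((tupF b n y).filter (fun v => collSet v = S)).card
      ≤ n.descFactorial (b - S.card) * b ^ S.card := by
  classical
  set FS := (tupF b n y).filter (fun v => collSet v = S) with hFS
  have hIcc : ∀ v ∈ FS, ∀ i : Fin b, v i ∈ Finset.Icc 1 n := by
    intro v hv i
    have := (Finset.mem_filter.1 ((Finset.mem_filter.1 hv).1)).1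
    exact Fintype.mem_piFinset.1 this i
  have hcoll : ∀ v ∈ FS, collSet v = S := fun v hv => (Finset.mem_filter.1 hv).2
  -- the encoding
  let ψ : {v // v ∈ FS} →
      (((Sᶜ : Finset (Fin b)) ↪ (Finset.Icc 1 n : Finset ℕ)) ×
        ({i // i ∈ S} → Fin b)) := fun ⟨v, hv⟩ =>
    (⟨fun i => ⟨v i.1, hIcc v hv i.1⟩, by
      rintro ⟨i₁, hi₁⟩ ⟨i₂, hi₂⟩ he
      have h1 : i₁ ∉ collSet v := by rw [hcoll v hv]; exact Finset.mem_compl.1 hi₁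
      have h2 : i₂ ∉ collSet v := by rw [hcoll v hv]; exact Finset.mem_compl.1 hi₂
      have : v i₁ = v i₂ := congrArg Subtype.val he
      exact Subtype.ext (injOn_of_not_coll h1 h2 this)⟩,
     fun i => pick v i.1)
  have hinj : Function.Injective ψ := by
    rintro ⟨v, hv⟩ ⟨w, hw⟩ he
    simp only [ψ, Prod.mk.injEq] at he
    refine Subtype.ext (funext fun i => ?_)
    have main : ∀ m : ℕ, ∀ i : Fin b, i.1 = m → v i = w i := by
      intro m
      induction m using Nat.strong_induction_on with
      | _ m ih =>
      rintro i rfl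
      by_cases hiS : i ∈ S
      · have hv' : ∃ j, j < i ∧ v j = v i := by
          have : i ∈ collSet v := (hcoll v hv) ▸ hiS
          simpa [collSet] using this
        have hw' : ∃ j, j < i ∧ w j = w i := by
          have : i ∈ collSet w := (hcoll w hw) ▸ hiS
          simpa [collSet] using this
        have hpp : pick v i = pick w i := by
          have := congrFun he.2 ⟨i, hiS⟩
          simpa using this
        obtain ⟨hlt, hvv⟩ := pick_spec hv'
        obtain ⟨hlt', hww⟩ := pick_spec hw'
        rw [← hvv, ← hww, hpp]
        exact ih (pick w i).1 (hpp ▸ hlt) _ rfl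
      · have := congrFun (congrArg (fun (e : _ ↪ _) => (e : _ → _)) he.1)
          ⟨i, Finset.mem_compl.2 hiS⟩
        exact congrArg Subtype.val this
    exact main i.1 i rfl
  calc FS.card = Fintype.card {v // v ∈ FS} := (Fintype.card_coe FS).symm
    _ ≤ _ := Fintype.card_le_of_injective ψ hinj
    _ = n.descFactorial (b - S.card) * b ^ S.card := by
        rw [Fintype.card_prod, Fintype.card_embedding_eq, Fintype.card_fun]
        simp [Fintype.card_coe, Nat.card_Icc, Finset.card_compl]

lemma tupF_card_le :
    (tupF b n y).card ≤ b.choose y * (n.descFactorial (b - y) * b ^ y) := by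
  classical
  have hfib : ∀ v ∈ tupF b n y,
      collSet v ∈ Finset.powersetCard y (Finset.univ : Finset (Fin b)) := by
    intro v hv
    rw [Finset.mem_powersetCard]
    exact ⟨Finset.subset_univ _, collSet_card v (Finset.mem_filter.1 hv).2⟩
  rw [Finset.card_eq_sum_card_fiberwise hfib]
  calc ∑ S ∈ Finset.powersetCard y (Finset.univ : Finset (Fin b)),
        ((tupF b n y).filter (fun v => collSet v = S)).card
      ≤ ∑ _S ∈ Finset.powersetCard y (Finset.univ : Finset (Fin b)),
          n.descFactorial (b - y) * b ^ y := by
        refine Finset.sum_le_sum fun S hS => ?_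
        have hcard := (Finset.mem_powersetCard.1 hS).2
        simpa [hcard] using fiber_card_le (n := n) (y := y) S
    _ = b.choose y * (n.descFactorial (b - y) * b ^ y) := by
        rw [Finset.sum_const, Finset.card_powersetCard, Finset.card_univ,
          Fintype.card_fin, smul_eq_mul]

lemma unifBins_singleton {k : ℕ} (hk : k ∈ Finset.Icc 1 n) :
    unifBins n {k} = (n : ℝ≥0∞)⁻¹ := by
  have h : ∀ j : ℕ, Measure.dirac j ({k} : Set ℕ) = if j = k then 1 else 0 := by
    intro j
    rw [Measure.dirac_apply' _ (MeasurableSet.singleton k)]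
    simp [Set.indicator_apply]
  rw [unifBins, Measure.smul_apply, Measure.finset_sum_apply]
  simp only [h, Finset.sum_ite_eq' (Finset.Icc 1 n) k (fun _ => (1 : ℝ≥0∞))]
  simp [hk]

lemma unifBins_out : unifBins n {x : ℕ | x ∉ Finset.Icc 1 n} = 0 := by
  rw [unifBins, Measure.smul_apply, Measure.finset_sum_apply]
  have h : ∀ j ∈ Finset.Icc 1 n, Measure.dirac j {x : ℕ | x ∉ Finset.Icc 1 n} = 0 := by
    intro j hj
    rw [Measure.dirac_apply' _ (by trivial)]
    simp only [Set.indicator_apply, Set.mem_setOf_eq, hj, not_true_eq_false, if_false]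
  rw [Finset.sum_congr rfl h]
  simp

end Aux

theorem stmt_7 {Ω : Type*} [MeasurableSpace Ω] (μ : Measure Ω) [IsProbabilityMeasure μ]
    (n b y : ℕ) (hn : 1 ≤ n) (hb : 1 ≤ b) (hy : y ≤ b - 1)
    (X : ℕ → Ω → ℕ) (hmeas : ∀ i, Measurable (X i))
    (hindep : iIndepFun X μ)
    (hunif : ∀ i, μ.map (X i) = unifBins n) :
    (μ {ω | collisions X b ω = y}).toReal ≤
      (b.choose y : ℝ) * (b : ℝ) ^ y * (n.descFactorial (b - y) : ℝ) / (n : ℝ) ^ b := by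
  classical
  set E := {ω | collisions X b ω = y} with hE
  set G := {ω | ∀ i ∈ Finset.range b, X i ω ∈ Finset.Icc 1 n} with hG
  set A : (Fin b → ℕ) → Set Ω :=
    fun v => ⋂ i ∈ Finset.range b, X i ⁻¹' {vext v i} with hA
  -- measure of each cylinder
  have hAv : ∀ v ∈ tupF b n y, μ (A v) = ((n : ℝ≥0∞)⁻¹) ^ b := by
    intro v hv
    have hmb := hindep.meas_biInter (S := Finset.range b)
      (s := fun i => X i ⁻¹' {vext v i})
      (fun i _ => ⟨{vext v i}, trivial, rfl⟩)
    rw [hA]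
    rw [hmb]
    have hone : ∀ i ∈ Finset.range b, μ (X i ⁻¹' {vext v i}) = (n : ℝ≥0∞)⁻¹ := by
      intro i hi
      obtain hi' := Finset.mem_range.1 hi
      rw [← Measure.map_apply (hmeas i) (MeasurableSet.singleton _), hunif i]
      have hmem : vext v i ∈ Finset.Icc 1 n := by
        have := Fintype.mem_piFinset.1 (Finset.mem_filter.1 hv).1 ⟨i, hi'⟩
        simpa [vext, hi'] using this
      exact unifBins_singleton hmem
    rw [Finset.prod_congr rfl hone, Finset.prod_const, Finset.card_range]
  -- the complement of G is null
  have hGc : μ Gᶜ = 0 := by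
    have hsub : Gᶜ ⊆ ⋃ i ∈ Finset.range b, X i ⁻¹' {x | x ∉ Finset.Icc 1 n} := by
      intro ω hω
      simp only [hG, Set.mem_compl_iff, Set.mem_setOf_eq, not_forall] at hω
      obtain ⟨i, hi, hx⟩ := hω
      exact Set.mem_biUnion hi hx
    refine measure_mono_null hsub ?_
    refine (measure_biUnion_null_iff (Finset.range b).countable_toSet).2 fun i _ => ?_
    rw [← Measure.map_apply (hmeas i) (by trivial), hunif i]
    exact unifBins_out
  -- inclusion into cylinders
  have hsubE : E ⊆ (⋃ v ∈ tupF b n y, A v) ∪ Gᶜ := by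
    intro ω hω
    by_cases hωG : ω ∈ G
    · left
      set v : Fin b → ℕ := fun i => X i ω with hv
      have himg : ((Finset.range b).image fun i => X i ω) = Finset.univ.image v := by
        ext x
        simp only [Finset.mem_image, Finset.mem_range, Finset.mem_univ, true_and, hv]
        constructor
        · rintro ⟨i, hi, rfl⟩; exact ⟨⟨i, hi⟩, rfl⟩
        · rintro ⟨i, rfl⟩; exact ⟨i.1, i.2, rfl⟩
      have hvmem : v ∈ tupF b n y := by
        rw [tupF, Finset.mem_filter, Fintype.mem_piFinset]
        refine ⟨fun i => hωG i.1 (Finset.mem_range.2 i.2), ?_⟩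
        have hcol : collisions X b ω = y := hω
        rw [collisions, himg] at hcol
        exact hcol
      refine Set.mem_biUnion hvmem ?_
      refine Set.mem_iInter₂.2 fun i hi => ?_
      simp [vext, Finset.mem_range.1 hi, hv]
    · right; exact hωG
  -- measure bound
  have hbound : μ E ≤ ((tupF b n y).card : ℝ≥0∞) * ((n : ℝ≥0∞)⁻¹) ^ b := by
    calc μ E ≤ μ ((⋃ v ∈ tupF b n y, A v) ∪ Gᶜ) := measure_mono hsubE
      _ ≤ μ (⋃ v ∈ tupF b n y, A v) + μ Gᶜ := measure_union_le _ _
      _ = μ (⋃ v ∈ tupF b n y, A v) := by rw [hGc, add_zero]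
      _ ≤ ∑ v ∈ tupF b n y, μ (A v) := measure_biUnion_finset_le _ _
      _ = ∑ _v ∈ tupF b n y, ((n : ℝ≥0∞)⁻¹) ^ b := Finset.sum_congr rfl hAv
      _ = _ := by rw [Finset.sum_const, nsmul_eq_mul]
  have hn0 : (n : ℝ≥0∞) ≠ 0 := by
    exact_mod_cast Nat.cast_ne_zero.2 (by omega)
  have hfin : ((tupF b n y).card : ℝ≥0∞) * ((n : ℝ≥0∞)⁻¹) ^ b ≠ ⊤ := by
    refine ENNReal.mul_ne_top (by simp) ?_
    exact ENNReal.pow_ne_top (ENNReal.inv_ne_top.2 hn0)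
  have hcard := tupF_card_le (b := b) (n := n) (y := y)
  have hnR : (0 : ℝ) < (n : ℝ) := by exact_mod_cast hn
  calc (μ E).toReal
      ≤ (((tupF b n y).card : ℝ≥0∞) * ((n : ℝ≥0∞)⁻¹) ^ b).toReal :=
        ENNReal.toReal_mono hfin hbound
    _ = ((tupF b n y).card : ℝ) * ((n : ℝ)⁻¹) ^ b := by
        rw [ENNReal.toReal_mul, ENNReal.toReal_pow, ENNReal.toReal_inv]
        simp
    _ ≤ ((b.choose y * (n.descFactorial (b - y) * b ^ y) : ℕ) : ℝ) * ((n : ℝ)⁻¹) ^ b := by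
        have : (0:ℝ) ≤ ((n : ℝ)⁻¹) ^ b := by positivity
        exact mul_le_mul_of_nonneg_right (by exact_mod_cast hcard) this
    _ = (b.choose y : ℝ) * (b : ℝ) ^ y * (n.descFactorial (b - y) : ℝ) / (n : ℝ) ^ b := by
        rw [div_eq_mul_inv, ← inv_pow]
        push_cast
        ring
end
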